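/- arXiv:1212.5684 — 5 statements merged into one kernel-verified Lean document; each statement's English description precedes it below -/
import Mathlib

section
/- Let 0 < θ < 1/2, d > 1, a > 1, and let u be a C² solution on [0,∞) of u'' + ((d-1)/r)u' + f(u) = 0 with u(0) = a, u'(0) = 0, where f(s) = s - s|s|^{-2θ}. Then u(r) < a for all r > 0. -/
open Set intervalIntegral

theorem stmt_6 (θ d a : ℝ) (hθ : 0 < θ) (hθ' : θ < 1/2) (hd : 1 < d) (ha : 1 < a)
    (f : ℝ → ℝ) (hf : ∀ s : ℝ, s ≠ 0 → f s = s - s * |s| ^ (-(2*θ))) (hf0 : f 0 = 0)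
    (u : ℝ → ℝ) (hu : ContDiff ℝ 2 u) (hu0 : u 0 = a) (hu'0 : deriv u 0 = 0)
    (hode : ∀ r : ℝ, 0 < r →
      deriv (deriv u) r + (d-1)/r * deriv u r + f (u r) = 0) :
    ∀ r : ℝ, 0 < r → u r < a := by
  -- f agrees everywhere with the explicit formula
  have hfeq : f = fun s : ℝ => s - s * |s| ^ (-(2*θ)) := by
    funext s
    rcases eq_or_ne s 0 with rfl | hs
    · simp [hf0]
    · exact hf s hs
  -- f is continuous
  have hfc : Continuous f := by
    rw [hfeq]
    apply continuous_id.sub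
    rw [continuous_iff_continuousAt]
    intro x
    rcases eq_or_ne x 0 with rfl | hx
    · have h1 : Filter.Tendsto (fun s : ℝ => |s| ^ (1 - 2*θ)) (nhds 0) (nhds 0) := by
        have hc : ContinuousAt (fun s : ℝ => |s| ^ (1 - 2*θ)) 0 := by
          have h0 : ContinuousAt (fun y : ℝ => y ^ (1 - 2*θ)) (|(0:ℝ)|) := by
            simpa using Real.continuousAt_rpow_const 0 (1 - 2*θ) (Or.inr (by linarith))
          exact h0.comp continuous_abs.continuousAt
        simpa [ContinuousAt, Real.zero_rpow (by linarith : (1:ℝ) - 2*θ ≠ 0)] using hc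
      have h2 : ∀ s : ℝ, ‖s * |s| ^ (-(2*θ))‖ ≤ |s| ^ (1 - 2*θ) := by
        intro s
        rcases eq_or_ne s 0 with rfl | hs
        · simp [Real.zero_rpow (by linarith : (1:ℝ) - 2*θ ≠ 0)]
        · have habs : (0:ℝ) < |s| := abs_pos.2 hs
          rw [Real.norm_eq_abs, abs_mul, abs_of_nonneg (Real.rpow_nonneg (abs_nonneg s) _)]
          rw [show (1:ℝ) - 2*θ = 1 + (-(2*θ)) by ring, Real.rpow_add habs, Real.rpow_one]
      have := squeeze_zero_norm h2 h1
      simpa [ContinuousAt] using this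
    · exact continuousAt_id.mul ((Real.continuousAt_rpow_const |x| _
        (Or.inl (abs_ne_zero.2 hx))).comp continuous_abs.continuousAt)
  -- f is positive on (1, ∞)
  have hfpos : ∀ s : ℝ, 1 < s → 0 < f s := by
    intro s hs
    rw [hf s (by linarith), abs_of_pos (by linarith : (0:ℝ) < s)]
    have h2 : s ^ (-(2*θ)) < 1 :=
      Real.rpow_lt_one_of_one_lt_of_neg hs (by linarith)
    nlinarith
  -- The potential F
  set F : ℝ → ℝ := fun t => ∫ x in (0:ℝ)..t, f x with hFdef
  have hFd : ∀ t : ℝ, HasDerivAt F (f t) t := fun t =>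
    intervalIntegral.integral_hasDerivAt_right
      (hfc.intervalIntegrable (μ := MeasureTheory.volume) 0 t)
      (hfc.stronglyMeasurableAtFilter MeasureTheory.volume (nhds t)) hfc.continuousAt
  have hFdiff : Differentiable ℝ F := fun t => (hFd t).differentiableAt
  have hFc : Continuous F := hFdiff.continuous
  -- F is strictly increasing above a
  have hFlt : ∀ t : ℝ, a < t → F a < F t := by
    intro t hat
    have hint1 := hfc.intervalIntegrable (μ := MeasureTheory.volume) 0 a
    have hint2 := hfc.intervalIntegrable (μ := MeasureTheory.volume) a t
    have hadd := intervalIntegral.integral_add_adjacent_intervals hint1 hint2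
    have hpos : 0 < ∫ x in a..t, f x :=
      intervalIntegral.intervalIntegral_pos_of_pos_on hint2
        (fun x hx => hfpos x (by linarith [hx.1])) hat
    have hFa : F a = ∫ x in (0:ℝ)..a, f x := rfl
    have hFt : F t = ∫ x in (0:ℝ)..t, f x := rfl
    rw [hFa, hFt]; linarith
  -- smoothness facts about u
  have hud : Differentiable ℝ u := hu.differentiable (by norm_num)
  have hu1 : ContDiff ℝ 1 (deriv u) := by
    have h2 : ContDiff ℝ (1+1) u := by
      convert hu using 2
      norm_num
    exact (contDiff_succ_iff_deriv.mp h2).2.2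
  have hu'd : Differentiable ℝ (deriv u) := hu1.differentiable one_ne_zero
  have hu'c : Continuous (deriv u) := hu'd.continuous
  -- the energy
  set E : ℝ → ℝ := fun r => (deriv u r)^2/2 + F (u r) with hEdef
  have hEd : ∀ r : ℝ, HasDerivAt E
      (deriv u r * deriv (deriv u) r + f (u r) * deriv u r) r := by
    intro r
    have h1 : HasDerivAt (fun x => (deriv u x)^2/2)
        (deriv u r * deriv (deriv u) r) r := by
      have : HasDerivAt (fun x => deriv u x * deriv u x / 2) ((deriv (deriv u) r * deriv u r + deriv u r * deriv (deriv u) r) / 2) r := ((hu'd r).hasDerivAt.mul (hu'd r).hasDerivAt).div_const 2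
      have heq : (fun x => deriv u x * deriv u x / 2) = fun x => (deriv u x)^2/2 := by
        funext x; ring
      rw [heq] at this
      convert this using 1; ring
    have h2 : HasDerivAt (fun x => F (u x)) (f (u r) * deriv u r) r :=
      (hFd (u r)).comp r (hud r).hasDerivAt
    exact h1.add h2
  have hEval : ∀ r : ℝ, 0 < r →
      HasDerivAt E (-((d-1)/r * (deriv u r)^2)) r := by
    intro r hr
    have h := hode r hr
    have h2 : deriv u r * deriv (deriv u) r + f (u r) * deriv u r
        = -((d-1)/r * (deriv u r)^2) := by
      have h3 : deriv (deriv u) r = -((d-1)/r * deriv u r) - f (u r) := by linarith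
      rw [h3]; ring
    rw [← h2]; exact hEd r
  have hEc : Continuous E := by
    apply Continuous.add
    · exact (hu'c.pow 2).div_const 2
    · exact hFc.comp hud.continuous
  -- E is antitone on [0, ∞)
  have hEanti : AntitoneOn E (Ici (0:ℝ)) := by
    apply antitoneOn_of_deriv_nonpos (convex_Ici 0) hEc.continuousOn
    · intro x hx
      rw [interior_Ici] at hx
      exact ((hEval x hx).differentiableAt).differentiableWithinAt
    · intro x hx
      rw [interior_Ici] at hx
      rw [(hEval x hx).deriv]
      have h1 : 0 ≤ (d-1)/x * (deriv u x)^2 :=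
        mul_nonneg (div_nonneg (by linarith) hx.le) (sq_nonneg _)
      linarith
  -- main argument
  intro r hr
  by_contra hcon
  push_neg at hcon
  have hE0 : E 0 = F a := by simp [hEdef, hu'0, hu0]
  have hEr : E r ≤ E 0 := hEanti self_mem_Ici (le_of_lt hr) hr.le
  have hFur : F (u r) ≤ E r := by
    have h1 : 0 ≤ (deriv u r)^2/2 := by positivity
    show F (u r) ≤ deriv u r ^ 2 / 2 + F (u r)
    linarith
  have hura : u r = a := by
    by_contra h
    have hlt : a < u r := lt_of_le_of_ne hcon (Ne.symm h)
    have := hFlt (u r) hlt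
    linarith
  have hErE0 : E r = E 0 := by
    rw [hura] at hFur
    linarith
  have hconstE : ∀ s ∈ Icc (0:ℝ) r, E s = E 0 := by
    intro s hs
    have h1 : E s ≤ E 0 := hEanti self_mem_Ici hs.1 hs.1
    have h2 : E r ≤ E s := hEanti hs.1 hr.le hs.2
    linarith
  have hu'zero : ∀ s ∈ Ioo (0:ℝ) r, deriv u s = 0 := by
    intro s hs
    have hder : deriv E s = 0 := by
      have hev : E =ᶠ[nhds s] fun _ => E 0 := by
        filter_upwards [Ioo_mem_nhds hs.1 hs.2] with x hx
        exact hconstE x (Ioo_subset_Icc_self hx)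
      rw [hev.deriv_eq]
      simp
    have h := (hEval s hs.1).deriv
    rw [hder] at h
    have hmul : (d-1)/s * (deriv u s)^2 = 0 := by linarith
    rcases mul_eq_zero.mp hmul with h1 | h1
    · exfalso
      have : 0 < (d-1)/s := div_pos (by linarith) hs.1
      linarith
    · exact sq_eq_zero_iff.mp h1
  -- u is constant equal to a on [0, r]
  have huconst : ∀ s ∈ Icc (0:ℝ) r, u s = a := by
    have hmono : MonotoneOn u (Icc 0 r) := by
      apply monotoneOn_of_deriv_nonneg (convex_Icc 0 r) hud.continuous.continuousOn
        (fun x _ => (hud x).differentiableWithinAt)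
      intro x hx
      rw [interior_Icc] at hx
      rw [hu'zero x hx]
    have hanti : AntitoneOn u (Icc 0 r) := by
      apply antitoneOn_of_deriv_nonpos (convex_Icc 0 r) hud.continuous.continuousOn
        (fun x _ => (hud x).differentiableWithinAt)
      intro x hx
      rw [interior_Icc] at hx
      rw [hu'zero x hx]
    intro s hs
    have h0mem : (0:ℝ) ∈ Icc (0:ℝ) r := ⟨le_refl 0, hr.le⟩
    have h1 := hmono h0mem hs hs.1
    have h2 := hanti h0mem hs hs.1
    rw [hu0] at h1 h2
    linarith
  -- contradiction via the ODE at r/2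
  set s₀ := r/2 with hs₀
  have hs₀mem : s₀ ∈ Ioo (0:ℝ) r := ⟨by positivity, by rw [hs₀]; linarith⟩
  have hdd : deriv (deriv u) s₀ = 0 := by
    have hev : deriv u =ᶠ[nhds s₀] fun _ => (0:ℝ) := by
      filter_upwards [Ioo_mem_nhds hs₀mem.1 hs₀mem.2] with x hx
      exact hu'zero x hx
    rw [hev.deriv_eq]
    simp
  have hODE := hode s₀ hs₀mem.1
  rw [hdd, hu'zero s₀ hs₀mem, huconst s₀ (Ioo_subset_Icc_self hs₀mem)] at hODE
  have := hfpos a ha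
  simp at hODE
  linarith
end

section
/- Let 0 < θ < 1/2, d > 1, 0 < a < 1, and let u be a C² solution on [0,∞) of u'' + ((d-1)/r)u' + f(u) = 0 with u(0) = a, u'(0) = 0, where f(s) = s - s|s|^{-2θ}. Then u(r) > a for all r > 0. -/
open Real Set Filter

theorem stmt_7 (θ d a : ℝ) (hθ : 0 < θ) (hθ' : θ < 1/2) (hd : 1 < d)
    (ha0 : 0 < a) (ha1 : a < 1)
    (f : ℝ → ℝ) (hf : ∀ s : ℝ, s ≠ 0 → f s = s - s * |s| ^ (-(2*θ))) (hf0 : f 0 = 0)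
    (u : ℝ → ℝ) (hu : ContDiff ℝ 2 u) (hu0 : u 0 = a) (hu'0 : deriv u 0 = 0)
    (hode : ∀ r : ℝ, 0 < r →
      deriv (deriv u) r + (d-1)/r * deriv u r + f (u r) = 0) :
    ∀ r : ℝ, 0 < r → a < u r := by
  -- regularity facts
  have hu1 : ContDiff ℝ ((1:ℕ)+1) u := by exact_mod_cast hu
  have hdiff : Differentiable ℝ u := hu1.differentiable (by norm_num)
  have hdu1 : ContDiff ℝ ((0:ℕ)+1) (deriv u) := by
    exact_mod_cast (contDiff_succ_iff_deriv.mp hu1).2.2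
  have hdiff' : Differentiable ℝ (deriv u) := hdu1.differentiable (by norm_num)
  have hcont : Continuous u := hdiff.continuous
  have hcont' : Continuous (deriv u) := hdiff'.continuous
  -- f is negative on (0,1)
  have hfneg : ∀ s : ℝ, 0 < s → s < 1 → f s < 0 := by
    intro s hs hs1
    rw [hf s hs.ne', abs_of_pos hs]
    have h1 : 1 < s ^ (-(2*θ)) := by
      rw [Real.one_lt_rpow_iff_of_pos hs]
      right; exact ⟨hs1, by linarith⟩
    nlinarith [mul_pos hs (sub_pos.mpr h1)]
  -- small interval where u ∈ (0,1)
  obtain ⟨ε₀, hε₀, hsmall⟩ : ∃ ε₀ > 0, ∀ r ∈ Icc 0 ε₀, 0 < u r ∧ u r < 1 := by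
    have h1 : {r : ℝ | u r ∈ Ioo 0 1} ∈ nhds (0:ℝ) := by
      apply hcont.continuousAt
      rw [hu0]; exact Ioo_mem_nhds ha0 ha1
    rw [Metric.mem_nhds_iff] at h1
    obtain ⟨ε, hε, hball⟩ := h1
    refine ⟨ε/2, by linarith, fun r hr => ?_⟩
    have : r ∈ Metric.ball (0:ℝ) ε := by
      rw [Real.ball_eq_Ioo]
      constructor <;> simp at hr ⊢ <;> [linarith [hr.1]; linarith [hr.2]]
    exact (hball this : u r ∈ Ioo 0 1)
  -- g = r^(d-1) * u'
  set g : ℝ → ℝ := fun r => r ^ (d-1) * deriv u r with hgdef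
  have hg' : ∀ r : ℝ, 0 < r → HasDerivAt g
      ((d-1) * r ^ (d-1-1) * deriv u r + r ^ (d-1) * deriv (deriv u) r) r := by
    intro r hr
    exact (Real.hasDerivAt_rpow_const (Or.inl hr.ne')).mul (hdiff' r).hasDerivAt
  have hgval : ∀ r : ℝ, 0 < r →
      (d-1) * r ^ (d-1-1) * deriv u r + r ^ (d-1) * deriv (deriv u) r
        = -(r ^ (d-1) * f (u r)) := by
    intro r hr
    have hode' := hode r hr
    have hsplit : r ^ (d-1) = r ^ (d-1-1) * r := by
      rw [← Real.rpow_add_one hr.ne']; ring_nf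
    rw [hsplit]
    have hrne : r ≠ 0 := hr.ne'
    field_simp at hode'
    linear_combination (r ^ (d-1-1)) * hode'
  -- u' > 0 on (0, ε₀]
  have hgcont : ContinuousOn g (Icc 0 ε₀) := by
    exact (continuousOn_id.rpow_const (fun x _ => Or.inr (by linarith))).mul hcont'.continuousOn
  have hgmono : StrictMonoOn g (Icc 0 ε₀) := by
    apply strictMonoOn_of_deriv_pos (convex_Icc _ _) hgcont
    intro x hx
    rw [interior_Icc] at hx
    have hx0 : 0 < x := hx.1
    have hder : deriv g x = -(x ^ (d-1) * f (u x)) := by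
      rw [(hg' x hx0).deriv]; exact hgval x hx0
    rw [hder]
    have hux := hsmall x ⟨hx0.le, hx.2.le⟩
    have h1 : f (u x) < 0 := hfneg _ hux.1 hux.2
    have h2 : 0 < x ^ (d-1) := Real.rpow_pos_of_pos hx0 _
    nlinarith
  have hg0 : g 0 = 0 := by
    simp [hgdef, hu'0]
  have hu'pos : ∀ r : ℝ, 0 < r → r ≤ ε₀ → 0 < deriv u r := by
    intro r hr hrε
    have h1 : g 0 < g r := hgmono ⟨le_rfl, hε₀.le⟩ ⟨hr.le, hrε⟩ hr
    rw [hg0] at h1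
    have h2 : 0 < r ^ (d-1) := Real.rpow_pos_of_pos hr _
    rcases mul_pos_iff.mp h1 with ⟨_, h⟩ | ⟨h, _⟩
    · exact h
    · linarith
  -- u > a on (0, ε₀]
  have humono : StrictMonoOn u (Icc 0 ε₀) := by
    apply strictMonoOn_of_deriv_pos (convex_Icc _ _) hcont.continuousOn
    intro x hx
    rw [interior_Icc] at hx
    exact hu'pos x hx.1 hx.2.le
  have hua : ∀ r : ℝ, 0 < r → r ≤ ε₀ → a < u r := by
    intro r hr hrε
    have := humono ⟨le_rfl, hε₀.le⟩ ⟨hr.le, hrε⟩ hr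
    rwa [hu0] at this
  -- main argument by contradiction
  by_contra hcon
  push_neg at hcon
  obtain ⟨r₀, hr₀, hur₀⟩ := hcon
  set S : Set ℝ := {r | 0 < r ∧ u r ≤ a} with hSdef
  have hSne : S.Nonempty := ⟨r₀, hr₀, hur₀⟩
  have hSbdd : BddBelow S := ⟨0, fun s hs => hs.1.le⟩
  set ζ := sInf S with hζdef
  have hζge : ε₀ ≤ ζ := by
    apply le_csInf hSne
    intro s hs
    by_contra h
    push_neg at h
    exact absurd hs.2 (not_le.mpr (hua s hs.1 h.le))
  have hζpos : 0 < ζ := lt_of_lt_of_le hε₀ hζge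
  have hζle : u ζ ≤ a := by
    have h1 : ζ ∈ closure S := csInf_mem_closure hSne hSbdd
    have h2 : closure S ⊆ {r | u r ≤ a} :=
      closure_minimal (fun s hs => hs.2) (isClosed_Iic.preimage hcont)
    exact h2 h1
  have hage : ∀ r : ℝ, 0 ≤ r → r < ζ → a ≤ u r := by
    intro r hr hrζ
    rcases hr.eq_or_lt with h | h
    · rw [← h, hu0]
    · by_contra hc
      push_neg at hc
      have : ζ ≤ r := csInf_le hSbdd ⟨h, hc.le⟩
      linarith
  have hζeq : u ζ = a := by
    refine le_antisymm hζle ?_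
    have htend : Tendsto u (nhdsWithin ζ (Iio ζ)) (nhds (u ζ)) :=
      (hcont.continuousAt).continuousWithinAt.tendsto
    refine ge_of_tendsto htend ?_
    have h0 : ∀ᶠ r in nhdsWithin ζ (Iio ζ), (0:ℝ) < r :=
      eventually_nhdsWithin_of_eventually_nhds (eventually_gt_nhds hζpos)
    filter_upwards [h0, self_mem_nhdsWithin] with r hr hr'
    exact hage r hr.le hr'
  -- energy
  set F : ℝ → ℝ := fun s => s^2/2 - s^(2-2*θ)/(2-2*θ) with hFdef
  set E : ℝ → ℝ := fun r => (deriv u r)^2/2 + F (u r) with hEdef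
  have h2θ : (2-2*θ) ≠ 0 := by linarith
  have hF' : ∀ s : ℝ, 0 < s → HasDerivAt F (f s) s := by
    intro s hs
    have h1 : HasDerivAt (fun x : ℝ => x^2/2) s s := by
      simpa using (hasDerivAt_pow 2 s).div_const 2
    have h2 : HasDerivAt (fun x : ℝ => x^(2-2*θ)/(2-2*θ)) (s^(1-2*θ)) s := by
      have h3 := (Real.hasDerivAt_rpow_const (p := 2-2*θ) (Or.inl hs.ne')).div_const (2-2*θ)
      refine h3.congr_deriv (Eq.symm ?_)
      rw [show (2:ℝ)-2*θ-1 = 1-2*θ by ring]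
      field_simp [show (1:ℝ) - θ ≠ 0 by linarith]
    have h4 := h1.sub h2
    refine h4.congr_deriv (Eq.symm ?_)
    rw [hf s hs.ne', abs_of_pos hs]
    rw [show (1:ℝ)-2*θ = 1 + -(2*θ) by ring, Real.rpow_add hs, Real.rpow_one]
  have hE' : ∀ r : ℝ, 0 < r → 0 < u r →
      HasDerivAt E (-((d-1)/r * (deriv u r)^2)) r := by
    intro r hr hur
    have h1 : HasDerivAt (fun x => (deriv u x)^2/2) (deriv u r * deriv (deriv u) r) r := by
      have := ((hdiff' r).hasDerivAt.pow 2).div_const 2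
      refine this.congr_deriv (Eq.symm ?_)
      ring
    have h2 : HasDerivAt (fun x => F (u x)) (f (u r) * deriv u r) r :=
      (hF' (u r) hur).comp r (hdiff r).hasDerivAt
    have h3 := h1.add h2
    refine h3.congr_deriv (Eq.symm ?_)
    linear_combination (-(deriv u r)) * hode r hr
  have hEcont : ∀ s : Set ℝ, (∀ x ∈ s, 0 < u x) → ContinuousOn E s := by
    intro s hs
    apply ContinuousOn.add ((hcont'.continuousOn.pow 2).div_const 2)
    apply ContinuousOn.sub ((hcont.continuousOn.pow 2).div_const 2)
    exact (hcont.continuousOn.rpow_const (fun x hx => Or.inl (hs x hx).ne')).div_const _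
  -- strict decrease on [0, ε₀]
  have hEanti1 : StrictAntiOn E (Icc 0 ε₀) := by
    apply strictAntiOn_of_deriv_neg (convex_Icc _ _)
      (hEcont _ (fun x hx => (hsmall x hx).1))
    intro x hx
    rw [interior_Icc] at hx
    have hx0 : 0 < x := hx.1
    have hux : 0 < u x := (hsmall x ⟨hx0.le, hx.2.le⟩).1
    rw [(hE' x hx0 hux).deriv]
    have h1 : 0 < deriv u x := hu'pos x hx0 hx.2.le
    have h2 : 0 < (d-1)/x * (deriv u x)^2 :=
      mul_pos (div_pos (by linarith) hx0) (pow_pos h1 2)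
    linarith
  -- weak decrease on [ε₀, ζ]
  have huposζ : ∀ x ∈ Icc ε₀ ζ, 0 < u x := by
    intro x hx
    rcases hx.2.eq_or_lt with h | h
    · rw [h, hζeq]; exact ha0
    · exact lt_of_lt_of_le ha0 (hage x (le_trans hε₀.le hx.1) h)
  have hEanti2 : AntitoneOn E (Icc ε₀ ζ) := by
    apply antitoneOn_of_deriv_nonpos (convex_Icc _ _) (hEcont _ huposζ)
    · intro x hx
      rw [interior_Icc] at hx
      have hx0 : 0 < x := lt_trans hε₀ hx.1
      exact (hE' x hx0 (huposζ x ⟨hx.1.le, hx.2.le⟩)).differentiableAt.differentiableWithinAt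
    · intro x hx
      rw [interior_Icc] at hx
      have hx0 : 0 < x := lt_trans hε₀ hx.1
      rw [(hE' x hx0 (huposζ x ⟨hx.1.le, hx.2.le⟩)).deriv]
      have h2 : 0 ≤ (d-1)/x * (deriv u x)^2 :=
        mul_nonneg (div_nonneg (by linarith) hx0.le) (sq_nonneg _)
      linarith
  -- contradiction
  have hEε : E ε₀ < E 0 :=
    hEanti1 ⟨le_rfl, hε₀.le⟩ ⟨hε₀.le, le_rfl⟩ hε₀
  have hEζ : E ζ ≤ E ε₀ := hEanti2 ⟨le_rfl, hζge⟩ ⟨hζge, le_rfl⟩ hζge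
  have hE0 : E 0 = F a := by simp [hEdef, hu'0, hu0]
  have hEζval : F a ≤ E ζ := by
    rw [hEdef]
    simp only [hζeq]
    nlinarith [sq_nonneg (deriv u ζ)]
  linarith
end

section
/- Let 0 < θ < 1/2, d > 1, 0 < a < 1, and let u be a C² solution on [0,∞) of u'' + ((d-1)/r)u' + f(u) = 0 with u(0) = a, u'(0) = 0, where f(s) = s - s|s|^{-2θ}. If t₁ > 0 is the first point with u'(t₁) = 0 and u is strictly increasing on (0, t₁), then u(t₁) > 1. -/
theorem stmt_8 (θ d a : ℝ) (hθ : 0 < θ) (hθ' : θ < 1/2) (hd : 1 < d)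
    (ha0 : 0 < a) (ha1 : a < 1)
    (f : ℝ → ℝ) (hf : ∀ s : ℝ, s ≠ 0 → f s = s - s * |s| ^ (-(2*θ))) (hf0 : f 0 = 0)
    (u : ℝ → ℝ) (hu : ContDiff ℝ 2 u) (hu0 : u 0 = a) (hu'0 : deriv u 0 = 0)
    (hode : ∀ r : ℝ, 0 < r →
      deriv (deriv u) r + (d-1)/r * deriv u r + f (u r) = 0)
    (t₁ : ℝ) (ht₁ : 0 < t₁) (hcrit : deriv u t₁ = 0)
    (hfirst : ∀ r ∈ Set.Ioo 0 t₁, deriv u r ≠ 0)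
    (hmono : StrictMonoOn u (Set.Icc 0 t₁)) :
    1 < u t₁ := by
  by_contra hle
  push_neg at hle
  set g : ℝ → ℝ := fun r => r ^ (d-1) * deriv u r with hg
  have hd1 : (0:ℝ) < d - 1 := by linarith
  have hu' : Differentiable ℝ (deriv u) := by
    have : ContDiff ℝ 1 (deriv u) :=
      ((contDiff_succ_iff_deriv).mp (show ContDiff ℝ (1+1) u by exact_mod_cast hu)).2.2
    exact this.differentiable one_ne_zero
  -- continuity of g
  have hcont : ContinuousOn g (Set.Icc 0 t₁) := by
    apply ContinuousOn.mul
    · exact (continuousOn_id.rpow_const fun x _ => Or.inr (le_of_lt hd1))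
    · exact (hu.continuous_deriv (by norm_num)).continuousOn
  -- derivative of g is positive on the interior
  have hderiv : ∀ x ∈ interior (Set.Icc (0:ℝ) t₁), 0 < deriv g x := by
    intro r hr
    rw [interior_Icc] at hr
    obtain ⟨hr0, hrt⟩ := hr
    have hdg : HasDerivAt g
        ((d-1) * r ^ (d-1-1) * deriv u r + r ^ (d-1) * deriv (deriv u) r) r := by
      have h1 : HasDerivAt (fun x : ℝ => x ^ (d-1)) ((d-1) * r ^ (d-1-1)) r := by
        have := Real.hasDerivAt_rpow_const (x := r) (p := d-1) (Or.inl (ne_of_gt hr0))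
        simpa [mul_comm] using this
      have h2 : HasDerivAt (deriv u) (deriv (deriv u) r) r := (hu' r).hasDerivAt
      exact h1.mul h2
    rw [hdg.deriv]
    -- bounds on u r
    have hur0 : 0 < u r := by
      have := hmono (Set.left_mem_Icc.mpr (le_of_lt ht₁))
        ⟨le_of_lt hr0, le_of_lt hrt⟩ hr0
      rw [hu0] at this; linarith
    have hur1 : u r < 1 := by
      have := hmono ⟨le_of_lt hr0, le_of_lt hrt⟩
        (Set.right_mem_Icc.mpr (le_of_lt ht₁)) hrt
      linarith
    -- f (u r) < 0
    have hfu : f (u r) < 0 := by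
      rw [hf _ (ne_of_gt hur0), abs_of_pos hur0]
      have hpow : 1 < (u r) ^ (-(2*θ)) := by
        apply Real.one_lt_rpow_iff_of_pos hur0 |>.mpr
        exact Or.inr ⟨hur1, by linarith⟩
      nlinarith
    -- rewrite the derivative
    have hrne : r ≠ 0 := ne_of_gt hr0
    have hsub : r ^ (d-1-1) = r ^ (d-1) / r := by
      rw [Real.rpow_sub hr0, Real.rpow_one]
    have hrp : (0:ℝ) < r ^ (d-1) := Real.rpow_pos_of_pos hr0 _
    have hode' := hode r hr0
    have : (d-1) * r ^ (d-1-1) * deriv u r + r ^ (d-1) * deriv (deriv u) r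
        = r ^ (d-1) * (-(f (u r))) := by
      have h3 : deriv (deriv u) r = -((d-1)/r) * deriv u r - f (u r) := by linarith
      rw [hsub, h3]
      field_simp
      ring
    rw [this]
    exact mul_pos hrp (by linarith)
  have hsm : StrictMonoOn g (Set.Icc 0 t₁) :=
    strictMonoOn_of_deriv_pos (convex_Icc 0 t₁) hcont hderiv
  have h0 : g 0 = 0 := by simp [hg, Real.zero_rpow (ne_of_gt hd1)]
  have h1 : g t₁ = 0 := by simp [hg, hcrit]
  have := hsm (Set.left_mem_Icc.mpr (le_of_lt ht₁))
    (Set.right_mem_Icc.mpr (le_of_lt ht₁)) ht₁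
  rw [h0, h1] at this
  exact lt_irrefl 0 this
end

section
/- Let 0 < θ < 1/2, d > 1, and let u be a C² solution of u'' + ((d-1)/r)u' + f(u) = 0 on (0,∞), with f(s) = s - s|s|^{-2θ}. Suppose there exist strictly increasing sequences (ζ_k) → ∞ of critical points of u with u'(ζ_k) = 0 and |u(ζ_k)| → 1, and a sequence (t_k) → ∞ with u(t_k) = 0 and ζ_k < t_k < ζ_{k+1}. Then a contradiction follows; i.e., such a configuration cannot occur. -/
theorem stmt_11 (θ d : ℝ) (hθ : 0 < θ) (hθ' : θ < 1/2) (hd : 1 < d)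
    (f : ℝ → ℝ) (hf : ∀ s : ℝ, s ≠ 0 → f s = s - s * |s| ^ (-(2*θ))) (hf0 : f 0 = 0)
    (u : ℝ → ℝ) (hu : ContDiff ℝ 2 u)
    (hode : ∀ r : ℝ, 0 < r →
      deriv (deriv u) r + (d-1)/r * deriv u r + f (u r) = 0)
    (ζ t : ℕ → ℝ) (hζpos : ∀ k, 0 < ζ k) (hζmono : StrictMono ζ)
    (hζtop : Filter.Tendsto ζ Filter.atTop Filter.atTop)
    (hζcrit : ∀ k, deriv u (ζ k) = 0)
    (hζval : Filter.Tendsto (fun k => |u (ζ k)|) Filter.atTop (nhds 1))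
    (ht : ∀ k, u (t k) = 0) (hsep : ∀ k, ζ k < t k ∧ t k < ζ (k+1)) :
    False := by
  set p : ℝ := 2 - 2*θ with hpdef
  have hp1 : 1 < p := by simp only [hpdef]; linarith
  have hp0 : 0 < p := by linarith
  have hp2 : p < 2 := by simp only [hpdef]; linarith
  set F : ℝ → ℝ := fun s => s^2/2 - |s|^p / p with hFdef
  have hF0 : F 0 = 0 := by
    simp [hFdef, Real.zero_rpow hp0.ne']
  -- F' = f everywhere
  have hFd : ∀ s : ℝ, HasDerivAt F (f s) s := by
    intro s
    rcases eq_or_ne s 0 with rfl | hs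
    · rw [hf0]
      have h1 : HasDerivAt (fun x : ℝ => |x|^p) 0 0 := by
        rw [hasDerivAt_iff_tendsto_slope]
        have habs : |(0:ℝ)|^p = 0 := by simp [Real.zero_rpow hp0.ne']
        apply squeeze_zero_norm' (a := fun x : ℝ => |x|^(p-1))
        · filter_upwards [self_mem_nhdsWithin] with x hx
          have hx0 : x ≠ 0 := hx
          have hxa : (0:ℝ) < |x| := abs_pos.mpr hx0
          have hsl : slope (fun x : ℝ => |x|^p) 0 x = |x|^p / x := by
            simp [slope, Real.zero_rpow hp0.ne', div_eq_inv_mul]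
          have heq : |x|^p / |x| = |x|^(p-1) := by
            rw [eq_comm, eq_div_iff hxa.ne', ← Real.rpow_add_one hxa.ne']
            congr 1; ring
          rw [hsl, Real.norm_eq_abs, abs_div, abs_of_nonneg (Real.rpow_nonneg (abs_nonneg x) p)]
          exact heq.le
        · have hc : ContinuousAt (fun x : ℝ => |x|^(p-1)) 0 := by
            have h1 : ContinuousAt (fun y : ℝ => y^(p-1)) (abs (0:ℝ)) :=
              Real.continuousAt_rpow_const _ _ (Or.inr (by linarith))
            exact h1.comp continuous_abs.continuousAt
          have h0 : |(0:ℝ)|^(p-1) = 0 := by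
            simp [Real.zero_rpow (by linarith : p - 1 ≠ 0)]
          have := hc.tendsto
          rw [h0] at this
          exact this.mono_left nhdsWithin_le_nhds
      have h2 : HasDerivAt (fun x : ℝ => x^2/2) 0 0 := by
        simpa using (hasDerivAt_pow 2 (0:ℝ)).div_const 2
      have := h2.sub (h1.div_const p)
      simpa [hFdef, Pi.sub_def] using this
    · have hxa : (0:ℝ) < |s| := abs_pos.mpr hs
      have habs := hasDerivAt_abs hs
      have hr : HasDerivAt (fun y : ℝ => y^p) (p * |s|^(p-1)) |s| :=
        Real.hasDerivAt_rpow_const (Or.inl (abs_ne_zero.mpr hs))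
      have h1 : HasDerivAt (fun x : ℝ => |x|^p) (p * |s|^(p-1) * (SignType.sign s : ℝ)) s :=
        hr.comp s habs
      have h2 : HasDerivAt (fun x : ℝ => x^2/2) s s := by
        have := (hasDerivAt_pow 2 s).div_const 2
        simpa [mul_comm] using this
      have h3 := h2.sub ((h1).div_const p)
      have hkey : p * |s|^(p-1) * (SignType.sign s : ℝ) / p = s * |s|^(-(2*θ)) := by
        have hsign : (SignType.sign s : ℝ) * |s| = s := sign_mul_abs s
        have hsplit : |s|^(p-1) = |s| * |s|^(p-2) := by
          rw [mul_comm, ← Real.rpow_add_one hxa.ne']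
          congr 1; ring
        have hexp : |s|^(p-2) = |s|^(-(2*θ)) := by
          congr 1
          rw [hpdef]; ring
        rw [hsplit, hexp]
        field_simp
        rw [mul_comm]; exact hsign
      rw [hkey] at h3
      rw [hf s hs]
      exact h3
  -- u is C², so deriv u is differentiable
  have hud : Differentiable ℝ u := hu.differentiable (by norm_num)
  have hu' : Differentiable ℝ (deriv u) := by
    have h2 : ContDiff ℝ ((1 : ℕ) + 1) u := by exact_mod_cast hu
    have := (contDiff_succ_iff_deriv.mp h2).2.2
    exact this.differentiable (by norm_num)
  -- the energy
  set E : ℝ → ℝ := fun r => (deriv u r)^2/2 + F (u r) with hEdef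
  have hEd : ∀ r : ℝ,
      HasDerivAt E (deriv u r * deriv (deriv u) r + f (u r) * deriv u r) r := by
    intro r
    have h1 : HasDerivAt (deriv u) (deriv (deriv u) r) r := (hu' r).hasDerivAt
    have h2 : HasDerivAt (fun x => (deriv u x)^2/2) (deriv u r * deriv (deriv u) r) r := by
      have h := (h1.pow 2).div_const 2
      refine h.congr_deriv ?_
      push_cast; ring
    have h3 : HasDerivAt (fun x => F (u x)) (f (u r) * deriv u r) r :=
      (hFd (u r)).comp r (hud r).hasDerivAt
    exact h2.add h3
  have hEanti : AntitoneOn E (Set.Ioi (0:ℝ)) := by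
    apply antitoneOn_of_deriv_nonpos (convex_Ioi 0)
    · exact fun x _ => ((hEd x).differentiableAt.continuousAt).continuousWithinAt
    · intro x hx
      exact (hEd x).differentiableAt.differentiableWithinAt
    · intro x hx
      rw [interior_Ioi] at hx
      rw [(hEd x).deriv]
      have hode' := hode x hx
      have hcx : 0 ≤ (d-1)/x := div_nonneg (by linarith) hx.le
      have hkey : deriv u x * deriv (deriv u) x + f (u x) * deriv u x
          = -((d-1)/x) * (deriv u x)^2 := by
        have hdd : deriv (deriv u) x = -((d-1)/x * deriv u x) - f (u x) := by linarith
        rw [hdd]; ring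
      rw [hkey]
      have := mul_nonneg hcx (sq_nonneg (deriv u x))
      linarith
  -- energy limit at ζ k is negative
  set G : ℝ → ℝ := fun x => x^2/2 - x^p / p with hGdef
  have hFG : ∀ s : ℝ, F s = G |s| := by
    intro s
    simp only [hFdef, hGdef, sq_abs]
  have hGc : ContinuousAt G 1 := by
    apply ContinuousAt.sub
    · exact (continuous_pow 2).continuousAt.div_const 2
    · exact (Real.continuousAt_rpow_const 1 p (Or.inl one_ne_zero)).div_const p
  have hlim : Filter.Tendsto (fun k => F (u (ζ k))) Filter.atTop (nhds (G 1)) := by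
    have := hGc.tendsto.comp hζval
    simpa [Function.comp_def, hFG] using this
  have hG1 : G 1 < 0 := by
    have : (1:ℝ) ^ p = 1 := Real.one_rpow p
    simp only [hGdef, this, one_pow]
    rw [sub_neg, div_lt_div_iff₀ (by norm_num) hp0]
    linarith
  have hev : ∀ᶠ k in Filter.atTop, F (u (ζ k)) < 0 :=
    hlim.eventually_lt_const hG1
  obtain ⟨k, hk⟩ := hev.exists
  have hEζ : E (ζ k) = F (u (ζ k)) := by
    simp [hEdef, hζcrit k]
  have hEt : 0 ≤ E (t k) := by
    simp only [hEdef, ht k, hF0, add_zero]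
    positivity
  have htpos : 0 < t k := lt_trans (hζpos k) (hsep k).1
  have := hEanti (Set.mem_Ioi.mpr (hζpos k)) (Set.mem_Ioi.mpr htpos) (hsep k).1.le
  rw [hEζ] at this
  linarith
end

section
/- Let 0 < θ < 1/2, d > 1, p = (1-θ)^{-1/(2θ)}, a > p, and let u be a C² solution of u'' + ((d-1)/r)u' + f(u) = 0 on [0,∞) with u(0) = a, u'(0) = 0, where f(s) = s - s|s|^{-2θ}. Then u cannot be strictly decreasing on all of (0,∞) with limit 0 or 1 at infinity; in particular, if u is monotone decreasing and bounded below by 0, its limit L at infinity must satisfy f(L) = 0, and both possible values L ∈ {0, 1} lead to contradictions; hence u has a first zero ρ_a < ∞ or a first interior critical point. -/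
open Filter Set Real

private lemma drift_le {v V : ℝ → ℝ} {R K : ℝ}
    (hv : ∀ x ∈ Set.Ici R, HasDerivAt v (V x) x)
    (hK : ∀ x ∈ Set.Ici R, V x ≤ K) :
    ∀ x ∈ Set.Ici R, ∀ y ∈ Set.Ici R, x ≤ y → v y ≤ v x + K * (y - x) := by
  have hmain : AntitoneOn (fun x => v x - K * x) (Set.Ici R) := by
    apply antitoneOn_of_deriv_nonpos (convex_Ici R)
    · intro x hx
      exact ((hv x hx).sub ((hasDerivAt_id x).const_mul K)).continuousAt.continuousWithinAt
    · intro x hx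
      rw [interior_Ici] at hx
      exact ((hv x (Set.mem_Ici.mpr (le_of_lt (Set.mem_Ioi.mp hx)))).sub
        ((hasDerivAt_id x).const_mul K)).differentiableAt.differentiableWithinAt
    · intro x hx
      rw [interior_Ici] at hx
      have hD : HasDerivAt (fun x => v x - K * x) (V x - K * 1) x :=
        (hv x (Set.mem_Ici.mpr (le_of_lt (Set.mem_Ioi.mp hx)))).sub ((hasDerivAt_id x).const_mul K)
      rw [hD.deriv]
      have := hK x (Set.mem_Ici.mpr (le_of_lt (Set.mem_Ioi.mp hx))); linarith
  intro x hx y hy hxy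
  have := hmain hx hy hxy
  simp only at this
  linarith

private lemma drift_ge {v V : ℝ → ℝ} {R K : ℝ}
    (hv : ∀ x ∈ Set.Ici R, HasDerivAt v (V x) x)
    (hK : ∀ x ∈ Set.Ici R, K ≤ V x) :
    ∀ x ∈ Set.Ici R, ∀ y ∈ Set.Ici R, x ≤ y → v x + K * (y - x) ≤ v y := by
  have hmain : MonotoneOn (fun x => v x - K * x) (Set.Ici R) := by
    apply monotoneOn_of_deriv_nonneg (convex_Ici R)
    · intro x hx
      exact ((hv x hx).sub ((hasDerivAt_id x).const_mul K)).continuousAt.continuousWithinAt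
    · intro x hx
      rw [interior_Ici] at hx
      exact ((hv x (Set.mem_Ici.mpr (le_of_lt (Set.mem_Ioi.mp hx)))).sub
        ((hasDerivAt_id x).const_mul K)).differentiableAt.differentiableWithinAt
    · intro x hx
      rw [interior_Ici] at hx
      have hD : HasDerivAt (fun x => v x - K * x) (V x - K * 1) x :=
        (hv x (Set.mem_Ici.mpr (le_of_lt (Set.mem_Ioi.mp hx)))).sub ((hasDerivAt_id x).const_mul K)
      rw [hD.deriv]
      have := hK x (Set.mem_Ici.mpr (le_of_lt (Set.mem_Ioi.mp hx))); linarith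
  intro x hx y hy hxy
  have := hmain hx hy hxy
  simp only at this
  linarith

private lemma deriv_nonpos_of_anti {u : ℝ → ℝ} (hdiff : Differentiable ℝ u)
    (hanti : AntitoneOn u (Set.Ioi (0:ℝ))) {x : ℝ} (hx : 0 < x) : deriv u x ≤ 0 := by
  have h := hasDerivAt_iff_tendsto_slope.mp (hdiff x).hasDerivAt
  have h2 : Tendsto (slope u x) (nhdsWithin x (Set.Ioi x)) (nhds (deriv u x)) :=
    h.mono_left (nhdsWithin_mono x (fun y hy => ne_of_gt hy))
  refine le_of_tendsto h2 ?_
  filter_upwards [self_mem_nhdsWithin] with y hy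
  have hxy : x < y := hy
  have hle : u y ≤ u x := hanti hx (hx.trans hxy) (le_of_lt hxy)
  rw [slope_def_field]
  have : (u y - u x) / (y - x) ≤ 0 := div_nonpos_iff.mpr (Or.inr ⟨by linarith, by linarith⟩)
  simpa [div_eq_inv_mul] using this

private lemma bern {θ s : ℝ} (hθ : 0 < θ) (hθ' : θ < 1/2) (hs : 0 ≤ s) :
    s ^ (1 - 2*θ) ≤ (1 - 2*θ)*s + 2*θ := by
  have h := Real.geom_mean_le_arith_mean2_weighted (by linarith : (0:ℝ) ≤ 1-2*θ)
    (by linarith : (0:ℝ) ≤ 2*θ) hs (zero_le_one) (by ring)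
  simpa using h

private lemma f_formula {θ : ℝ} {f : ℝ → ℝ}
    (hf : ∀ s : ℝ, s ≠ 0 → f s = s - s * |s| ^ (-(2*θ))) {s : ℝ} (hs : 0 < s) :
    f s = s - s ^ (1 - 2*θ) := by
  rw [hf s hs.ne', abs_of_pos hs]
  congr 1
  rw [show (1-2*θ) = 1 + -(2*θ) by ring, Real.rpow_add hs, Real.rpow_one]

private lemma f_lb {θ : ℝ} {f : ℝ → ℝ} (hθ : 0 < θ) (hθ' : θ < 1/2)
    (hf : ∀ s : ℝ, s ≠ 0 → f s = s - s * |s| ^ (-(2*θ))) {s : ℝ} (hs : 0 < s) :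
    2*θ*(s - 1) ≤ f s := by
  rw [f_formula hf hs]
  have := bern hθ hθ' hs.le
  linarith

private lemma g_deriv {d : ℝ} {f u : ℝ → ℝ}
    (hdiff' : Differentiable ℝ (deriv u))
    (hode : ∀ r : ℝ, 0 < r → deriv (deriv u) r + (d-1)/r * deriv u r + f (u r) = 0)
    {r : ℝ} (hr : 0 < r) :
    HasDerivAt (fun s => s ^ (d-1) * deriv u s) (-(r ^ (d-1) * f (u r))) r := by
  have h1 : HasDerivAt (fun s : ℝ => s ^ (d-1)) ((d-1) * r ^ (d-1-1)) r :=
    Real.hasDerivAt_rpow_const (Or.inl hr.ne')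
  have h3 := h1.mul (hdiff' r).hasDerivAt
  refine h3.congr_deriv ?_
  have hode' := hode r hr
  have hr2 : r ^ (d-1-1) = r ^ (d-1) / r := by
    rw [show (d-1-1) = (d-1) - 1 by ring, Real.rpow_sub hr, Real.rpow_one]
  have hu'' : deriv (deriv u) r = -((d-1)/r * deriv u r + f (u r)) := by linarith
  rw [hr2, hu'']
  ring
private lemma osc {θ d : ℝ} {f u : ℝ → ℝ} (hθ : 0 < θ) (hθ' : θ < 1/2) (hd : 1 < d)
    (hf : ∀ s : ℝ, s ≠ 0 → f s = s - s * |s| ^ (-(2*θ)))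
    (hdiff : Differentiable ℝ u) (hdiff' : Differentiable ℝ (deriv u))
    (hode : ∀ r : ℝ, 0 < r → deriv (deriv u) r + (d-1)/r * deriv u r + f (u r) = 0)
    (hgt : ∀ r : ℝ, 0 < r → 1 < u r)
    (hdnp : ∀ r : ℝ, 0 < r → deriv u r ≤ 0) : False := by
  set z : ℝ → ℝ := fun r => -(deriv u r) / (u r - 1) with hz_def
  set Z : ℝ → ℝ := fun r =>
    ((-(deriv (deriv u) r)) * (u r - 1) - (-(deriv u r)) * (deriv u r)) / (u r - 1)^2 with hZ_def
  have hw : ∀ r : ℝ, 0 < r → 0 < u r - 1 := fun r hr => by linarith [hgt r hr]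
  have hzD : ∀ r : ℝ, 0 < r → HasDerivAt z (Z r) r := by
    intro r hr
    exact ((hdiff' r).hasDerivAt.neg).div ((hdiff r).hasDerivAt.sub_const 1) (by
      have := hw r hr; intro h; rw [h] at this; exact lt_irrefl 0 this)
  have hznn : ∀ r : ℝ, 0 < r → 0 ≤ z r :=
    fun r hr => div_nonneg (by linarith [hdnp r hr]) (hw r hr).le
  set s2 : ℝ := Real.sqrt (2*θ) with hs2_def
  have hs2 : 0 < s2 := Real.sqrt_pos.mpr (by linarith)
  have hs2sq : s2^2 = 2*θ := Real.sq_sqrt (by linarith)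
  set R₂ : ℝ := max 1 ((d-1)/s2) with hR₂_def
  have hR₂pos : (0:ℝ) < R₂ := lt_of_lt_of_le one_pos (le_max_left _ _)
  have key : ∀ x ∈ Set.Ici R₂, (z x)^2/2 + θ ≤ Z x := by
    intro x hx
    have hxpos : 0 < x := lt_of_lt_of_le hR₂pos hx
    have hwx := hw x hxpos
    have hE1 : (d-1)/x ≤ s2 := by
      rw [div_le_iff₀ hxpos]
      have h2 : (d-1)/s2 ≤ x := le_trans (le_max_right _ _) hx
      rw [div_le_iff₀ hs2] at h2
      rw [mul_comm]
      linarith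
    have hE0 : 0 ≤ (d-1)/x := div_nonneg (by linarith) hxpos.le
    have hF : 2*θ*(u x - 1) ≤ f (u x) := f_lb hθ hθ' hf (by linarith)
    have hA : 0 ≤ -(deriv u x) := by linarith [hdnp x hxpos]
    have hode' := hode x hxpos
    have hu'' : -(deriv (deriv u) x) = (d-1)/x * deriv u x + f (u x) := by linarith
    set w := u x - 1 with hw_def
    set A := -(deriv u x) with hA_def
    set E := (d-1)/x with hE_def
    set F := f (u x) with hF_def
    have hDU : deriv u x = -A := by rw [hA_def]; ring
    have hZx : Z x = ((F - E*A)*w + A^2)/w^2 := by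
      simp only [hZ_def]
      rw [hu'', hDU, ← hw_def]
      ring
    have hzx : z x = A/w := by
      simp only [hz_def]; rw [← hw_def, ← hA_def]
    have hwne : w ≠ 0 := ne_of_gt hwx
    rw [hZx, hzx, ← sub_nonneg]
    have hiden : ((F - E*A)*w + A^2)/w^2 - ((A/w)^2/2 + θ) =
        ((F - 2*θ*w)*w + (s2-E)*(A*w) + (θ*w^2 - s2*(A*w) + A^2/2))/w^2 := by
      field_simp
      ring
    rw [hiden]
    apply div_nonneg _ (sq_nonneg w)
    have h1 : 0 ≤ (F - 2*θ*w)*w := mul_nonneg (by linarith) hwx.le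
    have h2 : 0 ≤ (s2 - E)*(A*w) := mul_nonneg (by linarith) (mul_nonneg hA hwx.le)
    have h3 : 0 ≤ (s2*w - A)^2 := sq_nonneg _
    have h4 : s2^2*w^2 = 2*θ*w^2 := by rw [hs2sq]
    have h3' : (s2*w - A)^2 = s2^2*w^2 - 2*(s2*(A*w)) + A^2 := by ring
    clear_value w A E F s2
    linarith [h1, h2, h3, h3', h4]
  have hzgrow : ∀ r ∈ Set.Ici R₂, z R₂ + θ * (r - R₂) ≤ z r := by
    intro r hr
    exact drift_ge (V := Z) (fun x hx => hzD x (lt_of_lt_of_le hR₂pos hx))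
      (fun x hx => by linarith [key x hx, sq_nonneg (z x)]) R₂ (Set.mem_Ici.mpr le_rfl) r hr hr
  set R₃ : ℝ := R₂ + 2/θ with hR₃_def
  have h2θ : 0 < 2/θ := by positivity
  have hR₃ : R₂ ≤ R₃ := by rw [hR₃_def]; linarith
  have hR₃pos : 0 < R₃ := lt_of_lt_of_le hR₂pos hR₃
  have hz2 : ∀ r ∈ Set.Ici R₃, 2 ≤ z r := by
    intro r hr
    have h1 := hzgrow r (le_trans hR₃ hr)
    have h0 := hznn R₂ hR₂pos
    have hrr : 2/θ ≤ r - R₂ := by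
      have : R₃ ≤ r := hr
      rw [hR₃_def] at this; linarith
    have hmul : θ * (2/θ) ≤ θ * (r - R₂) := mul_le_mul_of_nonneg_left hrr hθ.le
    have hti : θ * (2/θ) = 2 := by field_simp
    linarith
  set β : ℝ → ℝ := fun r => -(z r)⁻¹ with hβ_def
  have hβD : ∀ r ∈ Set.Ici R₃, HasDerivAt β (Z r/(z r)^2) r := by
    intro r hr
    have hz2r := hz2 r hr
    have hzne : z r ≠ 0 := by intro h; rw [h] at hz2r; linarith
    have h := ((hzD r (lt_of_lt_of_le hR₃pos hr)).inv hzne).neg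
    exact (by simpa [neg_div] using h : HasDerivAt (-z⁻¹) (Z r / z r ^ 2) r)
  have hβbound : ∀ x ∈ Set.Ici R₃, (1/2:ℝ) ≤ Z x/(z x)^2 := by
    intro x hx
    have hz2x := hz2 x hx
    have hzpos : (0:ℝ) < (z x)^2 := by positivity
    rw [le_div_iff₀ hzpos]
    have hk := key x (le_trans hR₃ hx)
    linarith
  have hgrow2 := drift_ge (V := fun r => Z r/(z r)^2) hβD hβbound R₃
    (Set.mem_Ici.mpr le_rfl) (R₃ + 3) (Set.mem_Ici.mpr (by linarith)) (by linarith)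
  have hβR₃ : -(1/2:ℝ) ≤ β R₃ := by
    have h2z := hz2 R₃ (Set.mem_Ici.mpr le_rfl)
    have : (z R₃)⁻¹ ≤ 2⁻¹ := by
      apply inv_anti₀ (by norm_num) h2z
    simp only [hβ_def]
    norm_num at this ⊢
    linarith
  have hβtop : β (R₃ + 3) < 0 := by
    have h2z := hz2 (R₃ + 3) (Set.mem_Ici.mpr (by linarith))
    have : (0:ℝ) < (z (R₃+3))⁻¹ := inv_pos.mpr (by linarith)
    simp only [hβ_def]
    linarith
  clear_value β R₃ R₂ s2 z Z
  linarith [hgrow2, hβR₃, hβtop]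

private lemma decay {θ d : ℝ} {f u : ℝ → ℝ} (hθ : 0 < θ) (hθ' : θ < 1/2) (hd : 1 < d)
    (hf : ∀ s : ℝ, s ≠ 0 → f s = s - s * |s| ^ (-(2*θ)))
    (hdiff : Differentiable ℝ u) (hdiff' : Differentiable ℝ (deriv u))
    (hode : ∀ r : ℝ, 0 < r → deriv (deriv u) r + (d-1)/r * deriv u r + f (u r) = 0)
    (hpos : ∀ r : ℝ, 0 < r → 0 < u r)
    (hdnp : ∀ r : ℝ, 0 < r → deriv u r ≤ 0)
    (hlim : Tendsto u atTop (nhds 0)) : False := by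
  have hε : (0:ℝ) < (1/2 : ℝ) ^ (1/(2*θ)) := Real.rpow_pos_of_pos (by norm_num) _
  have hev : ∀ᶠ r in atTop, u r < (1/2 : ℝ) ^ (1/(2*θ)) := hlim.eventually_lt_const hε
  obtain ⟨R₀, hR₀⟩ := eventually_atTop.mp hev
  set R : ℝ := max R₀ 1 with hR_def
  have hRpos : (0:ℝ) < R := lt_of_lt_of_le one_pos (le_max_right _ _)
  clear_value R
  have hsmall : ∀ r ∈ Set.Ici R, (u r) ^ (2*θ) ≤ 1/2 := by
    intro r hr
    have hrpos : 0 < r := lt_of_lt_of_le hRpos hr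
    have hur := hpos r hrpos
    have hlt : u r ≤ (1/2 : ℝ) ^ (1/(2*θ)) :=
      (hR₀ r (le_trans (le_trans (le_max_left _ _) hR_def.ge) hr)).le
    calc (u r) ^ (2*θ) ≤ ((1/2 : ℝ) ^ (1/(2*θ))) ^ (2*θ) :=
          Real.rpow_le_rpow hur.le hlt (by linarith)
      _ = (1/2 : ℝ) ^ ((1/(2*θ)) * (2*θ)) := by rw [← Real.rpow_mul (by norm_num)]
      _ = 1/2 := by
          rw [show (1/(2*θ)) * (2*θ) = 1 by field_simp, Real.rpow_one]
  have hconv : ∀ r ∈ Set.Ici R, (u r) ^ (1-2*θ)/2 ≤ deriv (deriv u) r := by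
    intro r hr
    have hrpos : 0 < r := lt_of_lt_of_le hRpos hr
    have hur := hpos r hrpos
    have hode' := hode r hrpos
    have hfr : f (u r) = u r - (u r) ^ (1-2*θ) := f_formula hf hur
    have hmix : u r ≤ (u r) ^ (1-2*θ)/2 := by
      have h5 : (u r) ^ (2*θ) * (u r) ^ (1-2*θ) ≤ (1/2) * (u r) ^ (1-2*θ) :=
        mul_le_mul_of_nonneg_right (hsmall r hr) (Real.rpow_nonneg hur.le _)
      rw [← Real.rpow_add hur] at h5
      norm_num at h5
      linarith
    have hterm : (d-1)/r * deriv u r ≤ 0 :=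
      mul_nonpos_of_nonneg_of_nonpos (div_nonneg (by linarith) hrpos.le) (hdnp r hrpos)
    linarith
  set H : ℝ → ℝ := fun r => (2-2*θ) * (deriv u r * deriv u r) - (u r)^(2-2*θ) with hH_def
  set V : ℝ → ℝ := fun r =>
    (2-2*θ) * (deriv (deriv u) r * deriv u r + deriv u r * deriv (deriv u) r) -
      deriv u r * (2-2*θ) * u r ^ (2-2*θ-1) with hV_def
  clear_value H V
  have hHD : ∀ r ∈ Set.Ici R, HasDerivAt H (V r) r := by
    intro r hr
    have hrpos : 0 < r := lt_of_lt_of_le hRpos hr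
    rw [hH_def, hV_def]
    exact ((((hdiff' r).hasDerivAt).mul ((hdiff' r).hasDerivAt)).const_mul (2-2*θ)).sub
      (((hdiff r).hasDerivAt).rpow_const (Or.inl (hpos r hrpos).ne'))
  have hVnp : ∀ r ∈ Set.Ici R, V r ≤ 0 := by
    intro r hr
    have hrpos : 0 < r := lt_of_lt_of_le hRpos hr
    have hur := hpos r hrpos
    have hcv := hconv r hr
    have hdn := hdnp r hrpos
    simp only [hV_def]
    rw [show (2-2*θ-1 : ℝ) = 1-2*θ by ring]
    have hsimp : (2-2*θ) * (deriv (deriv u) r * deriv u r + deriv u r * deriv (deriv u) r) -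
        deriv u r * (2-2*θ) * u r ^ (1-2*θ) =
        (2*(2-2*θ)) * (deriv u r * (deriv (deriv u) r - u r ^ (1-2*θ)/2)) := by ring
    rw [hsimp]
    apply mul_nonpos_of_nonneg_of_nonpos (by linarith)
    exact mul_nonpos_of_nonpos_of_nonneg hdn (by linarith)
  have hHanti := drift_le hHD hVnp
  have hHnn : ∀ r ∈ Set.Ici R, 0 ≤ H r := by
    intro r₀ hr₀
    by_contra hneg
    push_neg at hneg
    have hub : ∀ r ∈ Set.Ici r₀, -H r₀ ≤ (u r) ^ (2-2*θ) := by
      intro r hr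
      have hr' : r ∈ Set.Ici R := Set.mem_Ici.mpr (le_trans (Set.mem_Ici.mp hr₀) (Set.mem_Ici.mp hr))
      have h6 := hHanti r₀ hr₀ r hr' hr
      simp only [hH_def] at h6 hneg
      have h7 : 0 ≤ (2-2*θ) * (deriv u r * deriv u r) :=
        mul_nonneg (by linarith) (mul_self_nonneg _)
      simp only [hH_def]
      linarith
    have htend : Tendsto (fun r => (u r) ^ (2-2*θ)) atTop (nhds 0) := by
      have hc : ContinuousAt (fun x : ℝ => x ^ (2-2*θ)) 0 :=
        Real.continuousAt_rpow_const 0 _ (Or.inr (by linarith))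
      have h7 := hc.tendsto.comp hlim
      rwa [Real.zero_rpow (by linarith : (2-2*θ) ≠ 0)] at h7
    have hδ : (0:ℝ) < -H r₀ := by linarith
    simp only [hH_def] at hδ
    simp only [hH_def] at hub
    obtain ⟨N, hN⟩ := eventually_atTop.mp (htend.eventually_lt_const hδ)
    have hN' := hN (max N r₀) (le_max_left _ _)
    have hub' := hub (max N r₀) (Set.mem_Ici.mpr (le_max_right _ _))
    linarith
  -- from H ≥ 0 : deriv u ≤ -k u^{1-θ}
  have hc2 : (0:ℝ) < 2-2*θ := by linarith
  set k : ℝ := (Real.sqrt (2-2*θ))⁻¹ with hk_def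
  have hkpos : 0 < k := inv_pos.mpr (Real.sqrt_pos.mpr hc2)
  have hksq : k^2*(2-2*θ) = 1 := by
    rw [hk_def, inv_pow, Real.sq_sqrt hc2.le]
    field_simp
    exact div_self (by linarith)
  clear_value k
  have hslope : ∀ r ∈ Set.Ici R, deriv u r ≤ -(k * (u r)^(1-θ)) := by
    intro r hr
    have hrpos : 0 < r := lt_of_lt_of_le hRpos hr
    have hur := hpos r hrpos
    have hH := hHnn r hr
    simp only [hH_def] at hH
    have hsq : (k * (u r)^(1-θ))^2 ≤ (-(deriv u r))^2 := by
      have he : (k * (u r)^(1-θ))^2 = k^2 * (u r)^(2-2*θ) := by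
        rw [mul_pow, sq ((u r)^(1-θ)), ← Real.rpow_add hur,
          show (1-θ) + (1-θ) = 2-2*θ by ring]
      rw [he, show (-(deriv u r))^2 = deriv u r * deriv u r by ring]
      have hm := mul_le_mul_of_nonneg_left
        (show (u r)^(2-2*θ) ≤ (2-2*θ) * (deriv u r * deriv u r) by linarith)
        (sq_nonneg k)
      calc k^2 * (u r)^(2-2*θ) ≤ k^2 * ((2-2*θ) * (deriv u r * deriv u r)) := hm
        _ = (k^2*(2-2*θ)) * (deriv u r * deriv u r) := by ring
        _ = deriv u r * deriv u r := by rw [hksq]; ring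
    have h1 : 0 ≤ k * (u r)^(1-θ) := mul_nonneg hkpos.le (Real.rpow_nonneg hur.le _)
    have h2 : 0 ≤ -(deriv u r) := by linarith [hdnp r hrpos]
    have h3 := Real.sqrt_le_sqrt hsq
    rw [Real.sqrt_sq h1, Real.sqrt_sq h2] at h3
    linarith
  -- the function u^θ decreases at uniform rate
  set φ : ℝ → ℝ := fun r => (u r)^θ + (θ*k)*r with hφ_def
  set W : ℝ → ℝ := fun r => deriv u r * θ * (u r)^(θ-1) + θ*k with hW_def
  clear_value φ W
  have hφD : ∀ r ∈ Set.Ici R, HasDerivAt φ (W r) r := by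
    intro r hr
    have hrpos : 0 < r := lt_of_lt_of_le hRpos hr
    rw [hφ_def, hW_def]
    have h2 : HasDerivAt (fun y : ℝ => (θ*k)*y) (θ*k) r := by
      simpa using (hasDerivAt_id r).const_mul (θ*k)
    exact (((hdiff r).hasDerivAt).rpow_const (Or.inl (hpos r hrpos).ne')).add h2
  have hWnp : ∀ r ∈ Set.Ici R, W r ≤ 0 := by
    intro r hr
    have hrpos : 0 < r := lt_of_lt_of_le hRpos hr
    have hur := hpos r hrpos
    have hP : 0 ≤ θ * (u r)^(θ-1) :=
      mul_nonneg hθ.le (Real.rpow_nonneg hur.le _)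
    have hmul := mul_le_mul_of_nonneg_right (hslope r hr) hP
    have hone : (u r)^(1-θ) * (u r)^(θ-1) = 1 := by
      rw [← Real.rpow_add hur, show (1-θ) + (θ-1) = 0 by ring, Real.rpow_zero]
    have hcalc : (-(k * (u r)^(1-θ))) * (θ * (u r)^(θ-1)) = -(θ*k) := by
      calc (-(k * (u r)^(1-θ))) * (θ * (u r)^(θ-1))
          = -(θ*k) * ((u r)^(1-θ) * (u r)^(θ-1)) := by ring
        _ = -(θ*k) := by rw [hone]; ring
    simp only [hW_def]
    have h9 : deriv u r * (θ * (u r)^(θ-1)) ≤ -(θ*k) := by rw [← hcalc]; exact hmul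
    nlinarith [h9]
  have hφanti := drift_le hφD hWnp
  set rbig : ℝ := R + ((u R)^θ)/(θ*k) + 1 with hrbig_def
  have hθk : 0 < θ*k := mul_pos hθ hkpos
  have huRθ : 0 < (u R)^θ := Real.rpow_pos_of_pos (hpos R hRpos) _
  have hrbigR : R ≤ rbig := by
    rw [hrbig_def]
    have : 0 ≤ ((u R)^θ)/(θ*k) := le_of_lt (div_pos huRθ hθk)
    linarith
  have hdrift := hφanti R (Set.mem_Ici.mpr le_rfl) rbig (Set.mem_Ici.mpr hrbigR) hrbigR
  simp only [hφ_def] at hdrift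
  have hppos : 0 < (u rbig)^θ :=
    Real.rpow_pos_of_pos (hpos rbig (lt_of_lt_of_le hRpos hrbigR)) _
  have hexp : (θ*k)*rbig = (θ*k)*R + (u R)^θ + θ*k := by
    rw [hrbig_def]
    field_simp
  clear_value rbig
  rw [hexp] at hdrift
  linarith

private lemma flim_zero {θ d L : ℝ} {f u : ℝ → ℝ} (hθ : 0 < θ) (hθ' : θ < 1/2) (hd : 1 < d)
    (hf : ∀ s : ℝ, s ≠ 0 → f s = s - s * |s| ^ (-(2*θ)))
    (hdiff : Differentiable ℝ u) (hdiff' : Differentiable ℝ (deriv u))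
    (hode : ∀ r : ℝ, 0 < r → deriv (deriv u) r + (d-1)/r * deriv u r + f (u r) = 0)
    (hdnp : ∀ r : ℝ, 0 < r → deriv u r ≤ 0)
    (hge : ∀ r : ℝ, 0 ≤ r → L ≤ u r)
    (hlim : Tendsto u atTop (nhds L)) (hL : 0 < L) : f L = 0 := by
  by_contra h0
  rcases lt_or_gt_of_ne h0 with hneg | hpos'
  · -- case f L < 0
    have hFc : ContinuousAt (fun s : ℝ => s - s * |s| ^ (-(2*θ))) L := by
      have habs : ContinuousAt (fun s : ℝ => |s| ^ (-(2*θ))) L :=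
        (Real.continuousAt_rpow_const |L| (-(2*θ))
          (Or.inl (by simp [abs_ne_zero]; exact hL.ne'))).comp continuous_abs.continuousAt
      exact continuousAt_id.sub (continuousAt_id.mul habs)
    have htend : Tendsto (fun r => f (u r)) atTop (nhds (f L)) := by
      have h1 := (hFc.tendsto).comp hlim
      rw [← hf L hL.ne'] at h1
      apply h1.congr'
      filter_upwards [eventually_ge_atTop (0:ℝ)] with r hr
      exact (hf (u r) (by have := hge r hr; intro hz; rw [hz] at this; linarith)).symm
    obtain ⟨R₀, hR₀⟩ := eventually_atTop.mp (htend.eventually_lt_const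
      (show f L < f L / 2 by linarith))
    set R := max R₀ 1 with hRdef
    have hR1 : (1:ℝ) ≤ R := le_max_right _ _
    have hR₀R : R₀ ≤ R := le_max_left _ _
    have hRpos : (0:ℝ) < R := by linarith
    clear_value R
    set c := -(f L) with hcdef
    have hcpos : 0 < c := by rw [hcdef]; linarith
    clear_value c
    set K := R ^ (d-1) * (c/2) with hKdef
    have hKpos : 0 < K := mul_pos (Real.rpow_pos_of_pos hRpos _) (by linarith)
    have hgD : ∀ x ∈ Set.Ici R, HasDerivAt (fun s => s ^ (d-1) * deriv u s)
        (-(x ^ (d-1) * f (u x))) x := fun x hx =>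
      g_deriv hdiff' hode (lt_of_lt_of_le hRpos hx)
    have hVK : ∀ x ∈ Set.Ici R, K ≤ -(x ^ (d-1) * f (u x)) := by
      intro x hx
      have hxR : R ≤ x := hx
      have hfx : f (u x) < f L / 2 := hR₀ x (le_trans hR₀R hxR)
      have h1 : c/2 ≤ -(f (u x)) := by rw [hcdef]; linarith
      have hrp : R^(d-1) ≤ x^(d-1) := Real.rpow_le_rpow hRpos.le hxR (by linarith)
      calc K = R^(d-1) * (c/2) := hKdef
        _ ≤ x^(d-1) * (c/2) := mul_le_mul_of_nonneg_right hrp (by linarith)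
        _ ≤ x^(d-1) * (-(f (u x))) := mul_le_mul_of_nonneg_left h1
            (Real.rpow_nonneg (by linarith) _)
        _ = -(x^(d-1) * f (u x)) := by ring
    clear_value K
    set gR := R ^ (d-1) * deriv u R with hgRdef
    set rbig := R + (|gR|+1)/K with hrbigdef
    have hrbigR : R ≤ rbig := by
      rw [hrbigdef]
      have : 0 ≤ (|gR|+1)/K := div_nonneg (by positivity) hKpos.le
      linarith
    have hdrift := drift_ge hgD hVK R (Set.mem_Ici.mpr le_rfl) rbig
      (Set.mem_Ici.mpr hrbigR) hrbigR
    have hKK : K * (rbig - R) = |gR| + 1 := by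
      rw [hrbigdef]
      field_simp
      ring
    have hgpos : 0 < rbig ^ (d-1) * deriv u rbig := by
      have h2 := neg_abs_le gR
      rw [← hgRdef] at hdrift
      clear_value gR rbig
      linarith [hKK, hdrift]
    have hgnp : rbig ^ (d-1) * deriv u rbig ≤ 0 :=
      mul_nonpos_of_nonneg_of_nonpos (Real.rpow_nonneg (by linarith) _)
        (hdnp rbig (lt_of_lt_of_le hRpos hrbigR))
    linarith
  · -- case f L > 0 : L > 1 and oscillation
    have hL1 : 1 < L := by
      by_contra hle
      push_neg at hle
      have h1 : (1:ℝ) ≤ L ^ (-(2*θ)) :=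
        Real.one_le_rpow_of_pos_of_le_one_of_nonpos hL hle (by linarith)
      have hfL : f L = L - L * L ^ (-(2*θ)) := by rw [hf L hL.ne', abs_of_pos hL]
      nlinarith [mul_le_mul_of_nonneg_left h1 hL.le]
    exact osc hθ hθ' hd hf hdiff hdiff' hode
      (fun r hr => lt_of_lt_of_le hL1 (hge r hr.le)) hdnp

theorem stmt_12 (θ d a : ℝ) (hθ : 0 < θ) (hθ' : θ < 1/2) (hd : 1 < d)
    (p : ℝ) (hp : p = (1-θ) ^ (-(1/(2*θ)))) (ha : p < a)
    (f : ℝ → ℝ) (hf : ∀ s : ℝ, s ≠ 0 → f s = s - s * |s| ^ (-(2*θ))) (hf0 : f 0 = 0)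
    (u : ℝ → ℝ) (hu : ContDiff ℝ 2 u) (hu0 : u 0 = a) (hu'0 : deriv u 0 = 0)
    (hode : ∀ r : ℝ, 0 < r →
      deriv (deriv u) r + (d-1)/r * deriv u r + f (u r) = 0) :
    (AntitoneOn u (Set.Ici 0) → (∀ r : ℝ, 0 ≤ r → 0 ≤ u r) →
      ∀ L : ℝ, Filter.Tendsto u Filter.atTop (nhds L) → f L = 0) ∧
    ¬ (StrictAntiOn u (Set.Ioi 0) ∧
        (Filter.Tendsto u Filter.atTop (nhds 0) ∨ Filter.Tendsto u Filter.atTop (nhds 1))) ∧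
    ((∃ ρ : ℝ, 0 < ρ ∧ u ρ = 0) ∨ (∃ r : ℝ, 0 < r ∧ deriv u r = 0)) := by
  have hdiff : Differentiable ℝ u := hu.differentiable (by norm_num)
  have hcd1 : ContDiff ℝ 1 (deriv u) := by
    have h2 : ContDiff ℝ (1+1 : ℕ) u := by exact_mod_cast hu
    exact (contDiff_succ_iff_deriv.mp h2).2.2
  have hdiff' : Differentiable ℝ (deriv u) := hcd1.differentiable (by norm_num)
  have hcont' : Continuous (deriv u) := hdiff'.continuous
  have hp1 : 1 < p := by
    rw [hp, Real.one_lt_rpow_iff_of_pos (by linarith : (0:ℝ) < 1-θ)]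
    right
    exact ⟨by linarith, neg_lt_zero.mpr (by positivity)⟩
  have ha1 : 1 < a := lt_trans hp1 ha
  refine ⟨?_, ?_, ?_⟩
  · -- conjunct 1
    intro hanti hnn L hlim
    have hdnp : ∀ r : ℝ, 0 < r → deriv u r ≤ 0 := fun r hr =>
      deriv_nonpos_of_anti hdiff (hanti.mono Set.Ioi_subset_Ici_self) hr
    have hge : ∀ r : ℝ, 0 ≤ r → L ≤ u r := by
      intro r hr
      refine le_of_tendsto hlim ?_
      filter_upwards [eventually_ge_atTop r] with s hs
      exact hanti (Set.mem_Ici.mpr hr) (Set.mem_Ici.mpr (le_trans hr hs)) hs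
    have hL0 : 0 ≤ L := by
      refine ge_of_tendsto hlim ?_
      filter_upwards [eventually_ge_atTop (0:ℝ)] with s hs
      exact hnn s hs
    rcases eq_or_lt_of_le hL0 with hL | hL
    · rw [← hL]; exact hf0
    · exact flim_zero hθ hθ' hd hf hdiff hdiff' hode hdnp hge hlim hL
  · -- conjunct 2
    rintro ⟨hsa, hcase⟩
    have hdnp : ∀ r : ℝ, 0 < r → deriv u r ≤ 0 := fun r hr =>
      deriv_nonpos_of_anti hdiff hsa.antitoneOn hr
    have hgeL : ∀ L : ℝ, Tendsto u atTop (nhds L) → ∀ r : ℝ, 0 < r → L < u r := by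
      intro L hlim r hr
      have h1 : L ≤ u (r+1) := by
        refine le_of_tendsto hlim ?_
        filter_upwards [eventually_ge_atTop (r+1)] with s hs
        rcases eq_or_lt_of_le hs with h | h
        · exact le_of_eq (by rw [h])
        · exact (hsa (Set.mem_Ioi.mpr (by linarith)) (Set.mem_Ioi.mpr (by linarith)) h).le
      have h2 : u (r+1) < u r :=
        hsa (Set.mem_Ioi.mpr hr) (Set.mem_Ioi.mpr (by linarith)) (by linarith)
      linarith
    rcases hcase with hlim | hlim
    · exact decay hθ hθ' hd hf hdiff hdiff' hode
        (fun r hr => hgeL 0 hlim r hr) hdnp hlim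
    · exact osc hθ hθ' hd hf hdiff hdiff' hode
        (fun r hr => hgeL 1 hlim r hr) hdnp
  · -- conjunct 3
    by_contra hcon
    push_neg at hcon
    obtain ⟨hnz, hnd⟩ := hcon
    have hupos : ∀ r : ℝ, 0 ≤ r → 0 < u r := by
      intro r hr
      rcases eq_or_lt_of_le hr with h | hrpos
      · rw [← h, hu0]; linarith
      by_contra hle
      push_neg at hle
      have hlt : u r < 0 := lt_of_le_of_ne hle (hnz r hrpos)
      have hivt := intermediate_value_Ioo' hr (hu.continuous.continuousOn)
      have h0mem : (0:ℝ) ∈ Set.Ioo (u r) (u 0) := by rw [hu0]; exact ⟨hlt, by linarith⟩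
      obtain ⟨c, hcmem, hc⟩ := hivt h0mem
      exact hnz c hcmem.1 hc
    have hsign : (∀ r : ℝ, 0 < r → 0 < deriv u r) ∨ (∀ r : ℝ, 0 < r → deriv u r < 0) := by
      by_cases hc : ∀ r : ℝ, 0 < r → 0 < deriv u r
      · exact Or.inl hc
      · right
        push_neg at hc
        obtain ⟨r₁, hr₁, hr₁'⟩ := hc
        have hr₁neg : deriv u r₁ < 0 := lt_of_le_of_ne hr₁' (hnd r₁ hr₁)
        intro r hr
        rcases lt_trichotomy (deriv u r) 0 with h | h | h
        · exact h
        · exact absurd h (hnd r hr)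
        · exfalso
          rcases lt_trichotomy r r₁ with hlt | heq | hgt
          · have hivt := intermediate_value_Ioo' hlt.le hcont'.continuousOn
            obtain ⟨c, hcmem, hc⟩ := hivt (⟨hr₁neg, h⟩ : (0:ℝ) ∈ Set.Ioo _ _)
            exact hnd c (lt_trans hr hcmem.1) hc
          · rw [heq] at h; linarith
          · have hivt := intermediate_value_Ioo hgt.le hcont'.continuousOn
            obtain ⟨c, hcmem, hc⟩ := hivt (⟨hr₁neg, h⟩ : (0:ℝ) ∈ Set.Ioo _ _)
            exact hnd c (lt_trans hr₁ hcmem.1) hc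
    rcases hsign with hinc | hdec
    · -- u increasing : impossible
      have hmono : MonotoneOn u (Set.Ici 0) := by
        apply monotoneOn_of_deriv_nonneg (convex_Ici 0) hdiff.continuous.continuousOn
          hdiff.differentiableOn
        intro x hx
        rw [interior_Ici] at hx
        exact (hinc x hx).le
      have hua : ∀ r : ℝ, 0 ≤ r → a ≤ u r := by
        intro r hr
        have h1 := hmono Set.self_mem_Ici (Set.mem_Ici.mpr hr) hr
        rwa [hu0] at h1
      set c := 2*θ*(a-1) with hcdef
      have hcpos : 0 < c := by rw [hcdef]; apply mul_pos (by linarith) (by linarith)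
      clear_value c
      have hgD : ∀ x ∈ Set.Ici (1:ℝ), HasDerivAt (fun s => s^(d-1) * deriv u s)
          (-(x^(d-1) * f (u x))) x :=
        fun x hx => g_deriv hdiff' hode (lt_of_lt_of_le one_pos hx)
      have hVK : ∀ x ∈ Set.Ici (1:ℝ), -(x^(d-1) * f (u x)) ≤ -c := by
        intro x hx
        have hx0 : (0:ℝ) < x := lt_of_lt_of_le one_pos hx
        have hux : 0 < u x := hupos x hx0.le
        have hflb : c ≤ f (u x) := by
          have h1 := f_lb hθ hθ' hf hux
          have h2 := hua x hx0.le
          rw [hcdef]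
          nlinarith
        have hx1 : (1:ℝ) ≤ x^(d-1) := Real.one_le_rpow hx (by linarith)
        have h3 : c ≤ x^(d-1) * f (u x) := by nlinarith
        linarith
      have hdrift := drift_le hgD hVK
      set g1 := (1:ℝ)^(d-1) * deriv u 1 with hg1def
      set rbig := 1 + (|g1|+1)/c with hrbigdef
      have hrbig1 : (1:ℝ) ≤ rbig := by
        rw [hrbigdef]
        have : 0 ≤ (|g1|+1)/c := div_nonneg (by positivity) hcpos.le
        linarith
      have h := hdrift 1 (Set.mem_Ici.mpr le_rfl) rbig (Set.mem_Ici.mpr hrbig1) hrbig1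
      have hKK : -c * (rbig - 1) = -(|g1| + 1) := by
        rw [hrbigdef]
        field_simp
        ring
      have hpos2 : 0 < rbig^(d-1) * deriv u rbig :=
        mul_pos (Real.rpow_pos_of_pos (by linarith) _) (hinc rbig (by linarith))
      rw [← hg1def] at h
      clear_value g1 rbig
      linarith [le_abs_self g1, h, hKK, hpos2]
    · -- u decreasing : monotone limit, then decay or osc
      have hanti : AntitoneOn u (Set.Ici 0) := by
        apply antitoneOn_of_deriv_nonpos (convex_Ici 0) hdiff.continuous.continuousOn
          hdiff.differentiableOn
        intro x hx
        rw [interior_Ici] at hx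
        exact (hdec x hx).le
      set v : ℝ → ℝ := fun r => u (max r 0) with hvdef
      have hvanti : Antitone v := by
        intro x y hxy
        exact hanti (Set.mem_Ici.mpr (le_max_right x 0)) (Set.mem_Ici.mpr (le_max_right y 0))
          (max_le_max hxy le_rfl)
      have hbdd : BddBelow (Set.range v) := by
        refine ⟨0, ?_⟩
        rintro w ⟨r, rfl⟩
        exact (hupos (max r 0) (le_max_right r 0)).le
      have hlimv := tendsto_atTop_ciInf hvanti hbdd
      set L := ⨅ r, v r with hLdef
      clear_value L
      have hlim : Tendsto u atTop (nhds L) := by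
        apply hlimv.congr'
        filter_upwards [eventually_ge_atTop (0:ℝ)] with r hr
        rw [hvdef]
        simp only [max_eq_left hr]
      have hge : ∀ r : ℝ, 0 ≤ r → L ≤ u r := by
        intro r hr
        refine le_of_tendsto hlim ?_
        filter_upwards [eventually_ge_atTop r] with s hs
        exact hanti (Set.mem_Ici.mpr hr) (Set.mem_Ici.mpr (le_trans hr hs)) hs
      have hL0 : 0 ≤ L := by
        refine ge_of_tendsto hlim ?_
        filter_upwards [eventually_ge_atTop (0:ℝ)] with s hs
        exact (hupos s hs).le
      have hdnp : ∀ r : ℝ, 0 < r → deriv u r ≤ 0 := fun r hr => (hdec r hr).le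
      rcases eq_or_lt_of_le hL0 with hL | hLpos
      · refine decay hθ hθ' hd hf hdiff hdiff' hode (fun r hr => hupos r hr.le) hdnp ?_
        rw [hL]
        exact hlim
      · have hfL := flim_zero hθ hθ' hd hf hdiff hdiff' hode hdnp hge hlim hLpos
        have hL1 : L = 1 := by
          have hfeq : f L = L - L * L^(-(2*θ)) := by rw [hf L hLpos.ne', abs_of_pos hLpos]
          have h2 : L^(-(2*θ)) = 1 := by
            have h1 : L * (1 - L^(-(2*θ))) = 0 := by rw [hfeq] at hfL; linarith [hfL]
            rcases mul_eq_zero.mp h1 with h | h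
            · exact absurd h hLpos.ne'
            · linarith
          have h3 := congrArg Real.log h2
          rw [Real.log_rpow hLpos, Real.log_one] at h3
          have h4 : Real.log L = 0 := by
            rcases mul_eq_zero.mp h3 with h | h
            · exfalso; have : -(2*θ) < 0 := by linarith
              rw [h] at this; linarith
            · exact h
          rcases Real.log_eq_zero.mp h4 with h | h | h
          · exact absurd h hLpos.ne'
          · exact h
          · linarith
        have hsa : StrictAntiOn u (Set.Ici 0) := by
          apply strictAntiOn_of_deriv_neg (convex_Ici 0) hdiff.continuous.continuousOn
          intro x hx
          rw [interior_Ici] at hx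
          exact hdec x hx
        have hgt : ∀ r : ℝ, 0 < r → 1 < u r := by
          intro r hr
          have h1 : L ≤ u (r+1) := hge (r+1) (by linarith)
          have h2 : u (r+1) < u r :=
            hsa (Set.mem_Ici.mpr hr.le) (Set.mem_Ici.mpr (by linarith)) (by linarith)
          rw [hL1] at h1
          linarith
        exact osc hθ hθ' hd hf hdiff hdiff' hode hgt hdnp
end
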